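/- Let I be an index set, L ∈ ℕ, and for each i ∈ I let G_i be a group generated by a finite subset S_i with #S_i ≤ L, equipped with the word metric. Then the following are equivalent: (1) the family {(G_i, S_i)}_{i∈I} is uniformly amenable: for every ε > 0 there exist D ∈ ℕ and functions f_i : G_i → [0,∞) with Σ_{γ∈G_i} f_i(γ)² = 1, Σ_{γ∈G_i} (f_i(γ) − f_i(γs))² ≤ ε² for every s ∈ S_i, and supp(f_i) ⊆ B(1_{G_i}, D); (2) for every R ∈ ℕ and ε > 0 there exist D' ∈ ℕ and nonempty finite subsets F_i ⊆ G_i (i ∈ I) such that #((F_i · B(1_{G_i}, R)) \ F_i) ≤ ε · #F_i and F_i ⊆ B(1_{G_i}, D'). -/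

import Mathlib

open scoped Pointwise
open MeasureTheory
open scoped ENNReal NNReal

/-- The word-metric ball `B(1_G, D)` with respect to a generating set `S`:
the set of elements of `G` expressible as a product of at most `D` elements
of `S ∪ S⁻¹`. -/
def wordBall {G : Type*} [Group G] (S : Set G) (D : ℕ) : Set G :=
  {g | ∃ l : List G, l.length ≤ D ∧ (∀ x ∈ l, x ∈ S ∨ x⁻¹ ∈ S) ∧ l.prod = g}

section helpers
variable {G : Type*} [Group G] [DecidableEq G]

lemma listProd_mem_pow {T : Finset G} :
    ∀ l : List G, (∀ x ∈ l, x ∈ T) → l.prod ∈ T ^ l.length := by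
  intro l
  induction l with
  | nil => intro _; simpa using Finset.one_mem_one
  | cons x l ih =>
      intro h
      rw [List.prod_cons, List.length_cons, pow_succ']
      exact Finset.mul_mem_mul (h x (by simp)) (ih fun y hy => h y (by simp [hy]))

lemma exists_list_of_mem_pow {T : Finset G} :
    ∀ n (a : G), a ∈ T ^ n → ∃ l : List G, l.length = n ∧ (∀ x ∈ l, x ∈ T) ∧ l.prod = a := by
  intro n
  induction n with
  | zero => intro a ha; exact ⟨[], rfl, by simp, by simpa [Finset.mem_one, eq_comm] using ha⟩
  | succ n ih =>
      intro a ha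
      rw [pow_succ'] at ha
      obtain ⟨x, hx, b, hb, hxb⟩ := Finset.mem_mul.1 ha
      obtain ⟨l, hl, hlT, hlp⟩ := ih b hb
      exact ⟨x :: l, by simp [hl], by intro y hy; rcases List.mem_cons.1 hy with rfl | hy; exacts [hx, hlT y hy], by simp [hlp, hxb]⟩

/-- The symmetrized generating finset with identity. -/
abbrev genT (S : Finset G) : Finset G := S ∪ S⁻¹ ∪ {1}

lemma mem_genT {S : Finset G} {x : G} : x ∈ genT S ↔ x ∈ S ∨ x⁻¹ ∈ S ∨ x = 1 := by
  simp [genT, Finset.mem_union, Finset.mem_inv', or_assoc]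
  tauto

lemma prod_filter_ne_one_eq : ∀ l : List G, (l.filter (fun x => !decide (x = 1))).prod = l.prod := by
  intro l
  induction l with
  | nil => rfl
  | cons x l ih =>
      by_cases hx : x = 1
      · simp [hx, List.filter_cons, ih]
      · simp [List.filter_cons, hx, List.prod_cons, ih]

lemma wordBall_coe (S : Finset G) (R : ℕ) :
    wordBall (↑S) R = ((genT S ^ R : Finset G) : Set G) := by
  ext a
  constructor
  · rintro ⟨l, hlen, hmem, rfl⟩
    have h : (l ++ List.replicate (R - l.length) 1).prod ∈ genT S ^ (l ++ List.replicate (R - l.length) 1).length := by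
      apply listProd_mem_pow
      intro x hx
      rcases List.mem_append.1 hx with hx | hx
      · rcases hmem x hx with h | h
        · exact mem_genT.2 (Or.inl h)
        · exact mem_genT.2 (Or.inr (Or.inl h))
      · exact mem_genT.2 (Or.inr (Or.inr (List.eq_of_mem_replicate hx)))
    have hlen' : (l ++ List.replicate (R - l.length) 1).length = R := by
      simp [List.length_append, Nat.add_sub_cancel' hlen]
    rw [hlen'] at h
    have hprod : (l ++ List.replicate (R - l.length) 1).prod = l.prod := by
      simp [List.prod_append]
    rw [hprod] at h
    exact h
  · intro ha
    obtain ⟨l, hl, hlT, hlp⟩ := exists_list_of_mem_pow R a ha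
    refine ⟨l.filter (fun x => !decide (x = 1)), le_trans (List.length_filter_le _ _) (le_of_eq hl), ?_, ?_⟩
    · intro x hx
      have hx' := List.of_mem_filter hx
      have hxl := List.mem_of_mem_filter hx
      have hx1 : x ≠ 1 := by simpa using hx'
      rcases mem_genT.1 (hlT x hxl) with h | h | h
      · exact Or.inl h
      · exact Or.inr h
      · exact absurd h hx1
    · rw [← hlp]
      exact prod_filter_ne_one_eq l

lemma inv_mem_genT_pow {S : Finset G} {w : G} {R : ℕ} (hw : w ∈ genT S ^ R) :
    w⁻¹ ∈ genT S ^ R := by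
  obtain ⟨l, hl, hlT, hlp⟩ := exists_list_of_mem_pow R w hw
  have : w⁻¹ = ((l.map fun x => x⁻¹).reverse).prod := by rw [← hlp, List.prod_inv_reverse]
  rw [this]
  have h2 := listProd_mem_pow ((l.map fun x => x⁻¹).reverse) (fun x hx => by
    rcases List.mem_reverse.1 hx with hx
    obtain ⟨y, hy, rfl⟩ := List.mem_map.1 hx
    rcases mem_genT.1 (hlT y hy) with h | h | h
    · exact mem_genT.2 (Or.inr (Or.inl (by simpa using h)))
    · exact mem_genT.2 (Or.inl h)
    · exact mem_genT.2 (Or.inr (Or.inr (by simp [h]))))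
  simpa [hl] using h2

lemma card_genT_le {S : Finset G} {L : ℕ} (hL : S.card ≤ L) : (genT S).card ≤ 2 * L + 1 := by
  calc (genT S).card ≤ (S ∪ S⁻¹).card + ({1} : Finset G).card := Finset.card_union_le _ _
    _ ≤ S.card + S⁻¹.card + 1 := by
        have := Finset.card_union_le S S⁻¹
        simp only [Finset.card_singleton]
        omega
    _ ≤ 2 * L + 1 := by rw [Finset.card_inv]; omega
end helpers

section dir1
variable {G : Type*} [Group G] [DecidableEq G]

lemma reiter_to_folner (S : Finset G) (R D : ℕ) {ε ε₀ : ℝ} (hε : 0 < ε) (hε₀ : 0 < ε₀)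
    (f : G → ℝ) (hf0 : ∀ γ, 0 ≤ f γ) (hf1 : ∑' γ, f γ ^ 2 = 1)
    (hf2 : ∀ s ∈ S, ∑' γ, (f γ - f (γ * s)) ^ 2 ≤ ε₀ ^ 2)
    (hsupp : Function.support f ⊆ ((genT S ^ D : Finset G) : Set G))
    (hbound : (2 * R * (((genT S).card : ℝ) ^ R)) * ε₀ < ε) :
    ∃ F : Finset G, F.Nonempty ∧ ((((F * genT S ^ R) \ F).card : ℝ)) ≤ ε * F.card ∧
      (F : Set G) ⊆ ((genT S ^ D : Finset G) : Set G) := by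
  classical
  set T : Finset G := genT S with hT
  set BD : Finset G := T ^ D with hBD
  set B : Finset G := T ^ R with hB
  set K : Finset G := T ^ (D + R) with hK
  set g : G → ℝ := fun γ => f γ ^ 2 with hg
  have hg0 : ∀ γ, 0 ≤ g γ := fun γ => sq_nonneg _
  have hgsupp : ∀ γ, γ ∉ BD → g γ = 0 := by
    intro γ hγ
    by_contra h
    have hf' : f γ ≠ 0 := fun h0 => h (by simp [hg, h0])
    exact hγ (hsupp hf')
  have hsumf2 : Summable (fun γ => f γ ^ 2) :=
    summable_of_ne_finset_zero (s := BD) (fun γ hγ => hgsupp γ hγ)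
  have hg1 : ∀ γ, g γ ≤ 1 := by
    intro γ
    have := Summable.le_tsum hsumf2 γ (fun b _ => sq_nonneg _)
    rwa [hf1] at this
  -- the ℓ¹ translation distance
  set Φ : G → ℝ := fun w => ∑' γ, |g (γ * w) - g γ| with hΦ
  have hsum : ∀ w : G, Summable (fun γ => |g (γ * w) - g γ|) := by
    intro w
    apply summable_of_ne_finset_zero (s := BD * {w⁻¹} ∪ BD)
    intro γ hγ
    rw [Finset.mem_union, not_or] at hγ
    have h1 : g (γ * w) = 0 := by
      apply hgsupp
      intro hmem
      apply hγ.1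
      have : (γ * w) * w⁻¹ ∈ BD * ({w⁻¹} : Finset G) :=
        Finset.mul_mem_mul hmem (Finset.mem_singleton_self _)
      simpa using this
    have h2 : g γ = 0 := hgsupp γ hγ.2
    simp [h1, h2]
  have hΦ_nonneg : ∀ w, 0 ≤ Φ w := fun w => tsum_nonneg (fun γ => abs_nonneg _)
  have hΦS : ∀ s ∈ S, Φ s ≤ 2 * ε₀ := by
    intro s hs
    set A : Finset G := (BD * {s⁻¹}) ∪ BD with hA
    have hz : ∀ γ ∉ A, |g (γ * s) - g γ| = 0 := by
      intro γ hγ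
      rw [hA, Finset.mem_union, not_or] at hγ
      have h1 : g (γ * s) = 0 := by
        apply hgsupp
        intro hmem
        apply hγ.1
        have : (γ * s) * s⁻¹ ∈ BD * ({s⁻¹} : Finset G) :=
          Finset.mul_mem_mul hmem (Finset.mem_singleton_self _)
        simpa using this
      have h2 : g γ = 0 := hgsupp γ hγ.2
      simp [h1, h2]
    have hAsum : (Φ s) = ∑ γ ∈ A, |g (γ * s) - g γ| := tsum_eq_sum hz
    have key : ∀ γ, |g (γ * s) - g γ| = |f (γ * s) - f γ| * (f (γ * s) + f γ) := by
      intro γ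
      have h1 : g (γ * s) - g γ = (f (γ * s) - f γ) * (f (γ * s) + f γ) := by
        simp only [hg]; ring
      rw [h1, abs_mul, abs_of_nonneg (add_nonneg (hf0 _) (hf0 _))]
    have cs := Finset.sum_mul_sq_le_sq_mul_sq A
      (fun γ => |f (γ * s) - f γ|) (fun γ => f (γ * s) + f γ)
    have hsumdiff : Summable (fun γ => (f γ - f (γ * s)) ^ 2) := by
      apply summable_of_ne_finset_zero (s := A)
      intro γ hγ
      have := hz γ hγ
      have h1 : g (γ * s) = g γ := by
        rcases abs_eq_zero.1 this with h
        linarith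
      -- both are zero off A
      rw [hA, Finset.mem_union, not_or] at hγ
      have h2 : g γ = 0 := hgsupp γ hγ.2
      have h3 : g (γ * s) = 0 := by rw [h1, h2]
      have h4 : f γ = 0 := by
        have := h2; simp only [hg] at this; exact pow_eq_zero_iff (by norm_num) |>.1 this
      have h5 : f (γ * s) = 0 := by
        have := h3; simp only [hg] at this; exact pow_eq_zero_iff (by norm_num) |>.1 this
      simp [h4, h5]
    have hd1 : ∑ γ ∈ A, |f (γ * s) - f γ| ^ 2 ≤ ε₀ ^ 2 := by
      have heq : ∀ γ, |f (γ * s) - f γ| ^ 2 = (f γ - f (γ * s)) ^ 2 := by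
        intro γ; rw [sq_abs]; ring
      rw [Finset.sum_congr rfl (fun γ _ => heq γ)]
      exact le_trans (Summable.sum_le_tsum A (fun γ _ => sq_nonneg _) hsumdiff) (hf2 s hs)
    have hsumtr : Summable (fun γ => f (γ * s) ^ 2) := by
      apply summable_of_ne_finset_zero (s := BD * {s⁻¹})
      intro γ hγ
      have hns : γ * s ∉ BD := fun hm => hγ (by
        have := Finset.mul_mem_mul hm (Finset.mem_singleton_self s⁻¹)
        simpa using this)
      have h0 := hgsupp _ hns
      rw [hg] at h0
      simpa using h0
    have htr1 : ∑ γ ∈ A, f (γ * s) ^ 2 ≤ 1 := by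
      have := Summable.sum_le_tsum A (fun γ _ => sq_nonneg _) hsumtr
      have heq : ∑' γ, f (γ * s) ^ 2 = 1 := by
        rw [← hf1]
        exact (Equiv.mulRight s).tsum_eq (fun γ => f γ ^ 2)
      linarith
    have htr2 : ∑ γ ∈ A, f γ ^ 2 ≤ 1 := by
      have := Summable.sum_le_tsum A (fun γ _ => sq_nonneg _) hsumf2
      linarith [hf1]
    have hd2 : ∑ γ ∈ A, (f (γ * s) + f γ) ^ 2 ≤ 4 := by
      have hpt : ∀ γ ∈ A, (f (γ * s) + f γ) ^ 2 ≤ 2 * f (γ * s) ^ 2 + 2 * f γ ^ 2 := by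
        intro γ _; nlinarith [sq_nonneg (f (γ * s) - f γ)]
      calc ∑ γ ∈ A, (f (γ * s) + f γ) ^ 2
          ≤ ∑ γ ∈ A, (2 * f (γ * s) ^ 2 + 2 * f γ ^ 2) := Finset.sum_le_sum hpt
        _ = 2 * ∑ γ ∈ A, f (γ * s) ^ 2 + 2 * ∑ γ ∈ A, f γ ^ 2 := by
            rw [Finset.sum_add_distrib, Finset.mul_sum, Finset.mul_sum]
        _ ≤ 4 := by linarith
    have hlhs0 : 0 ≤ ∑ γ ∈ A, |f (γ * s) - f γ| * (f (γ * s) + f γ) := by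
      apply Finset.sum_nonneg
      intro γ _
      exact mul_nonneg (abs_nonneg _) (add_nonneg (hf0 _) (hf0 _))
    have hS1 : (0:ℝ) ≤ ∑ γ ∈ A, |f (γ * s) - f γ| ^ 2 :=
      Finset.sum_nonneg fun γ _ => sq_nonneg _
    have hS2 : (0:ℝ) ≤ ∑ γ ∈ A, (f (γ * s) + f γ) ^ 2 :=
      Finset.sum_nonneg fun γ _ => sq_nonneg _
    have hprod : (∑ γ ∈ A, |f (γ * s) - f γ| ^ 2) * (∑ γ ∈ A, (f (γ * s) + f γ) ^ 2)
        ≤ ε₀ ^ 2 * 4 := by nlinarith [hd1, hd2, hS1, hS2, sq_nonneg ε₀]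
    rw [hAsum, Finset.sum_congr rfl (fun γ _ => key γ)]
    nlinarith [cs, hprod, hlhs0, hε₀.le]
  have hΦinv : ∀ u : G, Φ u⁻¹ = Φ u := by
    intro u
    have h1 : Φ u⁻¹ = ∑' γ, |g (γ * u * u⁻¹) - g (γ * u)| :=
      ((Equiv.mulRight u).tsum_eq (fun γ => |g (γ * u⁻¹) - g γ|)).symm
    rw [h1]
    apply tsum_congr
    intro γ
    rw [mul_inv_cancel_right]
    exact abs_sub_comm _ _
  have hΦT : ∀ s ∈ T, Φ s ≤ 2 * ε₀ := by
    intro s hsT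
    rcases mem_genT.1 hsT with h | h | h
    · exact hΦS s h
    · have := hΦS s⁻¹ h
      rwa [← hΦinv s⁻¹, inv_inv] at this
    · subst h
      have : Φ 1 = 0 := by
        simp only [hΦ, mul_one, sub_self, abs_zero]
        exact tsum_zero
      rw [this]; positivity
  have hΦlist : ∀ l : List G, (∀ x ∈ l, x ∈ T) → Φ l.prod ≤ 2 * l.length * ε₀ := by
    intro l
    induction l with
    | nil =>
        intro _
        simp only [List.prod_nil, List.length_nil]
        have : Φ 1 = 0 := by
          simp only [hΦ, mul_one, sub_self, abs_zero]
          exact tsum_zero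
        rw [this]; push_cast; nlinarith
    | cons x l ih =>
        intro h
        have hx := h x (by simp)
        have hl := ih (fun y hy => h y (by simp [hy]))
        have hsum1 : Summable (fun γ => |g (γ * x * l.prod) - g (γ * x)|) := by
          apply summable_of_ne_finset_zero (s := BD * {(x * l.prod)⁻¹} ∪ BD * {x⁻¹})
          intro γ hγ
          rw [Finset.mem_union, not_or] at hγ
          have h1 : g (γ * x * l.prod) = 0 := by
            apply hgsupp
            intro hm
            apply hγ.1
            have := Finset.mul_mem_mul hm (Finset.mem_singleton_self (x * l.prod)⁻¹)
            have he : γ * x * l.prod * (x * l.prod)⁻¹ = γ := by group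
            rwa [he] at this
          have h2 : g (γ * x) = 0 := by
            apply hgsupp
            intro hm
            apply hγ.2
            have := Finset.mul_mem_mul hm (Finset.mem_singleton_self x⁻¹)
            have he : γ * x * x⁻¹ = γ := by group
            rwa [he] at this
          simp [h1, h2]
        have step : Φ (x * l.prod) ≤ Φ l.prod + Φ x := by
          have hpt : ∀ γ, |g (γ * (x * l.prod)) - g γ| ≤
              |g (γ * x * l.prod) - g (γ * x)| + |g (γ * x) - g γ| := by
            intro γ
            rw [← mul_assoc]
            exact abs_sub_le _ _ _
          calc Φ (x * l.prod) = ∑' γ, |g (γ * (x * l.prod)) - g γ| := rfl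
            _ ≤ ∑' γ, (|g (γ * x * l.prod) - g (γ * x)| + |g (γ * x) - g γ|) :=
                Summable.tsum_le_tsum hpt (hsum _) (hsum1.add (hsum x))
            _ = (∑' γ, |g (γ * x * l.prod) - g (γ * x)|) + ∑' γ, |g (γ * x) - g γ| :=
                Summable.tsum_add hsum1 (hsum x)
            _ = Φ l.prod + Φ x := by
                congr 1
                exact (Equiv.mulRight x).tsum_eq (fun γ => |g (γ * l.prod) - g γ|)
        rw [List.prod_cons, List.length_cons]
        push_cast
        calc Φ (x * l.prod) ≤ Φ l.prod + Φ x := step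
          _ ≤ 2 * l.length * ε₀ + 2 * ε₀ := add_le_add hl (hΦT x hx)
          _ = 2 * ((l.length : ℝ) + 1) * ε₀ := by ring
  have hΦB : ∀ w ∈ B, Φ w ≤ 2 * R * ε₀ := by
    intro w hw
    obtain ⟨l, hl, hlT, hlp⟩ := exists_list_of_mem_pow R w hw
    have := hΦlist l hlT
    rwa [hlp, hl] at this
  -- sublevel sets
  set Ft : ℝ → Finset G := fun t => BD.filter (fun γ => t < g γ) with hFt
  have main : ∃ t ∈ Set.Ioo (0:ℝ) 1, (Ft t).Nonempty ∧
      ((((Ft t * B) \ Ft t).card : ℝ)) ≤ ε * (Ft t).card := by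
    by_contra hcon
    push_neg at hcon
    have hkey : ∀ t ∈ Set.Ioo (0:ℝ) 1,
        ENNReal.ofReal ε * ((Ft t).card : ℝ≥0∞) ≤ ((((Ft t * B) \ Ft t).card : ℕ) : ℝ≥0∞) := by
      intro t ht
      rcases (Ft t).eq_empty_or_nonempty with he | hne
      · simp [he]
      · have := (hcon t ht hne).le
        have hr : ε * ((Ft t).card : ℝ) ≤ ((((Ft t * B) \ Ft t).card : ℕ) : ℝ) := this
        calc ENNReal.ofReal ε * ((Ft t).card : ℝ≥0∞)
            = ENNReal.ofReal (ε * ((Ft t).card : ℝ)) := by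
              rw [ENNReal.ofReal_mul hε.le, ENNReal.ofReal_natCast]
          _ ≤ ENNReal.ofReal ((((Ft t * B) \ Ft t).card : ℕ) : ℝ) := ENNReal.ofReal_le_ofReal hr
          _ = ((((Ft t * B) \ Ft t).card : ℕ) : ℝ≥0∞) := ENNReal.ofReal_natCast _
    set μ : Measure ℝ := volume.restrict (Set.Ioo 0 1) with hμ
    have hcardFt : ∀ t : ℝ, (((Ft t).card : ℕ) : ℝ≥0∞) =
        ∑ γ ∈ BD, Set.indicator (Set.Iio (g γ)) (1 : ℝ → ℝ≥0∞) t := by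
      intro t
      rw [hFt]
      simp only [Finset.card_filter]
      push_cast
      refine Finset.sum_congr rfl fun γ _ => ?_
      by_cases h : t < g γ <;> simp [Set.indicator_apply, Set.mem_Iio, h]
    have hAint : ∫⁻ t, (((Ft t).card : ℕ) : ℝ≥0∞) ∂μ = 1 := by
      calc ∫⁻ t, (((Ft t).card : ℕ) : ℝ≥0∞) ∂μ
          = ∫⁻ t, ∑ γ ∈ BD, Set.indicator (Set.Iio (g γ)) (1 : ℝ → ℝ≥0∞) t ∂μ := by
            apply lintegral_congr
            intro t
            exact hcardFt t
        _ = ∑ γ ∈ BD, ∫⁻ t, Set.indicator (Set.Iio (g γ)) (1 : ℝ → ℝ≥0∞) t ∂μ :=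
            lintegral_finset_sum _ (fun γ _ => measurable_one.indicator measurableSet_Iio)
        _ = ∑ γ ∈ BD, ENNReal.ofReal (g γ) := by
            refine Finset.sum_congr rfl fun γ _ => ?_
            rw [lintegral_indicator_one measurableSet_Iio, hμ,
              Measure.restrict_apply measurableSet_Iio]
            have hset : Set.Iio (g γ) ∩ Set.Ioo 0 1 = Set.Ioo 0 (g γ) := by
              ext t
              simp only [Set.mem_inter_iff, Set.mem_Iio, Set.mem_Ioo]
              constructor
              · rintro ⟨h1, h2, h3⟩; exact ⟨h2, h1⟩
              · rintro ⟨h1, h2⟩; exact ⟨h2, h1, lt_of_lt_of_le h2 (hg1 γ)⟩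
            rw [hset, Real.volume_Ioo, sub_zero]
        _ = ENNReal.ofReal (∑ γ ∈ BD, g γ) := (ENNReal.ofReal_sum_of_nonneg (fun γ _ => hg0 γ)).symm
        _ = 1 := by
            have : ∑ γ ∈ BD, g γ = 1 := by
              rw [← tsum_eq_sum (L := SummationFilter.unconditional G) (s := BD) (fun γ hγ => hgsupp γ hγ)]
              exact hf1
            rw [this, ENNReal.ofReal_one]
    have hptw : ∀ t ∈ Set.Ioo (0:ℝ) 1, ((((Ft t * B) \ Ft t).card : ℕ) : ℝ≥0∞) ≤
        ∑ w ∈ B, ∑ γ ∈ K, Set.indicator (Set.Ico (g γ) (g (γ * w⁻¹))) (1 : ℝ → ℝ≥0∞) t := by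
      intro t ht
      have hsub : (Ft t * B) \ Ft t ⊆
          B.biUnion (fun w => K.filter (fun γ => g γ ≤ t ∧ t < g (γ * w⁻¹))) := by
        intro γ hγ
        rw [Finset.mem_sdiff] at hγ
        obtain ⟨x, hx, w, hw, rfl⟩ := Finset.mem_mul.1 hγ.1
        have hxBD : x ∈ BD := Finset.mem_of_mem_filter x hx
        have hxg : t < g x := (Finset.mem_filter.1 hx).2
        refine Finset.mem_biUnion.2 ⟨w, hw, Finset.mem_filter.2 ⟨?_, ?_, ?_⟩⟩
        · have := Finset.mul_mem_mul hxBD hw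
          rwa [hK, pow_add]
        · by_contra hcg
          push_neg at hcg
          have hfne : f (x * w) ≠ 0 := by
            intro h0
            have : g (x * w) = 0 := by simp [hg, h0]
            rw [this] at hcg
            linarith [ht.1]
          have : x * w ∈ BD := hsupp hfne
          exact hγ.2 (Finset.mem_filter.2 ⟨this, hcg⟩)
        · have hxw : (x * w) * w⁻¹ = x := by group
          rw [hxw]
          exact hxg
      calc ((((Ft t * B) \ Ft t).card : ℕ) : ℝ≥0∞)
          ≤ (((B.biUnion (fun w => K.filter (fun γ => g γ ≤ t ∧ t < g (γ * w⁻¹)))).card : ℕ) : ℝ≥0∞) := by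
            exact_mod_cast Nat.cast_le.2 (Finset.card_le_card hsub)
        _ ≤ ∑ w ∈ B, (((K.filter (fun γ => g γ ≤ t ∧ t < g (γ * w⁻¹))).card : ℕ) : ℝ≥0∞) := by
            have := Finset.card_biUnion_le (s := B)
              (t := fun w => K.filter (fun γ => g γ ≤ t ∧ t < g (γ * w⁻¹)))
            exact_mod_cast Nat.cast_le.2 this
        _ = ∑ w ∈ B, ∑ γ ∈ K, Set.indicator (Set.Ico (g γ) (g (γ * w⁻¹))) (1 : ℝ → ℝ≥0∞) t := by
            refine Finset.sum_congr rfl fun w _ => ?_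
            rw [Finset.card_filter]
            push_cast
            refine Finset.sum_congr rfl fun γ _ => ?_
            by_cases h : g γ ≤ t ∧ t < g (γ * w⁻¹) <;>
              simp [Set.indicator_apply, Set.mem_Ico, h]
    have hBint : ∫⁻ t, ((((Ft t * B) \ Ft t).card : ℕ) : ℝ≥0∞) ∂μ ≤
        ENNReal.ofReal (2 * R * ε₀) * B.card := by
      calc ∫⁻ t, ((((Ft t * B) \ Ft t).card : ℕ) : ℝ≥0∞) ∂μ
          ≤ ∫⁻ t, ∑ w ∈ B, ∑ γ ∈ K,
              Set.indicator (Set.Ico (g γ) (g (γ * w⁻¹))) (1 : ℝ → ℝ≥0∞) t ∂μ := by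
            apply lintegral_mono_ae
            rw [hμ, ae_restrict_iff' measurableSet_Ioo]
            exact ae_of_all _ hptw
        _ = ∑ w ∈ B, ∑ γ ∈ K,
              ∫⁻ t, Set.indicator (Set.Ico (g γ) (g (γ * w⁻¹))) (1 : ℝ → ℝ≥0∞) t ∂μ := by
            rw [lintegral_finset_sum _ (fun w _ => Finset.measurable_sum _
              (fun γ _ => measurable_one.indicator measurableSet_Ico))]
            exact Finset.sum_congr rfl fun w _ =>
              lintegral_finset_sum _ (fun γ _ => measurable_one.indicator measurableSet_Ico)
        _ ≤ ∑ w ∈ B, ∑ γ ∈ K, ENNReal.ofReal (g (γ * w⁻¹) - g γ) := by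
            refine Finset.sum_le_sum fun w _ => Finset.sum_le_sum fun γ _ => ?_
            rw [lintegral_indicator_one measurableSet_Ico, hμ,
              Measure.restrict_apply measurableSet_Ico]
            calc volume (Set.Ico (g γ) (g (γ * w⁻¹)) ∩ Set.Ioo 0 1)
                ≤ volume (Set.Ico (g γ) (g (γ * w⁻¹))) :=
                  measure_mono Set.inter_subset_left
              _ = ENNReal.ofReal (g (γ * w⁻¹) - g γ) := Real.volume_Ico
        _ ≤ ∑ w ∈ B, ENNReal.ofReal (2 * R * ε₀) := by
            refine Finset.sum_le_sum fun w hw => ?_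
            calc ∑ γ ∈ K, ENNReal.ofReal (g (γ * w⁻¹) - g γ)
                ≤ ∑ γ ∈ K, ENNReal.ofReal (|g (γ * w⁻¹) - g γ|) := by
                  refine Finset.sum_le_sum fun γ _ => ENNReal.ofReal_le_ofReal (le_abs_self _)
              _ = ENNReal.ofReal (∑ γ ∈ K, |g (γ * w⁻¹) - g γ|) :=
                  (ENNReal.ofReal_sum_of_nonneg (fun γ _ => abs_nonneg _)).symm
              _ ≤ ENNReal.ofReal (Φ w⁻¹) := ENNReal.ofReal_le_ofReal
                  (Summable.sum_le_tsum K (fun γ _ => abs_nonneg _) (hsum w⁻¹))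
              _ ≤ ENNReal.ofReal (2 * R * ε₀) := ENNReal.ofReal_le_ofReal
                  (hΦB w⁻¹ (inv_mem_genT_pow hw))
        _ = ENNReal.ofReal (2 * R * ε₀) * B.card := by
            rw [Finset.sum_const, nsmul_eq_mul, mul_comm]
    -- combine
    have hcomb : ENNReal.ofReal ε ≤ ENNReal.ofReal (2 * R * ε₀) * B.card := by
      calc ENNReal.ofReal ε = ENNReal.ofReal ε * 1 := (mul_one _).symm
        _ = ENNReal.ofReal ε * ∫⁻ t, (((Ft t).card : ℕ) : ℝ≥0∞) ∂μ := by rw [hAint]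
        _ = ∫⁻ t, ENNReal.ofReal ε * (((Ft t).card : ℕ) : ℝ≥0∞) ∂μ :=
            (lintegral_const_mul' _ _ ENNReal.ofReal_ne_top).symm
        _ ≤ ∫⁻ t, ((((Ft t * B) \ Ft t).card : ℕ) : ℝ≥0∞) ∂μ := by
            apply lintegral_mono_ae
            rw [hμ, ae_restrict_iff' measurableSet_Ioo]
            exact ae_of_all _ hkey
        _ ≤ ENNReal.ofReal (2 * R * ε₀) * B.card := hBint
    have hBcard : (B.card : ℝ≥0∞) ≤ ((T.card ^ R : ℕ) : ℝ≥0∞) :=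
      Nat.cast_le.2 Finset.card_pow_le
    have hfinal : ENNReal.ofReal ε ≤ ENNReal.ofReal (2 * R * ε₀ * (T.card ^ R : ℕ)) := by
      calc ENNReal.ofReal ε ≤ ENNReal.ofReal (2 * R * ε₀) * B.card := hcomb
        _ ≤ ENNReal.ofReal (2 * R * ε₀) * ((T.card ^ R : ℕ) : ℝ≥0∞) := by
            exact mul_le_mul_right hBcard _
        _ = ENNReal.ofReal (2 * R * ε₀ * (T.card ^ R : ℕ)) := by
            rw [ENNReal.ofReal_mul (p := 2 * (R:ℝ) * ε₀) (by positivity),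
              ENNReal.ofReal_natCast]
    have hlt : ENNReal.ofReal (2 * R * ε₀ * (T.card ^ R : ℕ)) < ENNReal.ofReal ε := by
      rw [ENNReal.ofReal_lt_ofReal_iff hε]
      push_cast
      nlinarith [hbound]
    exact absurd (lt_of_le_of_lt hfinal hlt) (lt_irrefl _)
  obtain ⟨t, ht, hne, hcard⟩ := main
  exact ⟨Ft t, hne, hcard, by
    intro γ hγ
    have : γ ∈ Ft t := hγ
    exact Finset.mem_coe.2 (Finset.mem_of_mem_filter γ this)⟩
end dir1

section dir2
variable {G : Type*} [Group G] [DecidableEq G]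

lemma folner_to_reiter (S : Finset G) {ε : ℝ} (hε : 0 < ε)
    (F : Finset G) (hne : F.Nonempty)
    (hbd : ((((F * (S ∪ S⁻¹ ∪ {1})) \ F : Finset G).card : ℝ)) ≤ ε ^ 2 / 2 * F.card) :
    ∃ f : G → ℝ, (∀ γ, 0 ≤ f γ) ∧ (∑' γ, f γ ^ 2 = 1) ∧
      (∀ s ∈ S, ∑' γ, (f γ - f (γ * s)) ^ 2 ≤ ε ^ 2) ∧
      Function.support f ⊆ (F : Set G) := by
  classical
  have hcard : (0 : ℝ) < F.card := by exact_mod_cast Finset.card_pos.2 hne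
  set c : ℝ := (Real.sqrt F.card)⁻¹ with hc
  have hsq : Real.sqrt (F.card : ℝ) > 0 := Real.sqrt_pos.2 hcard
  have hcpos : 0 < c := by positivity
  have hc2 : c ^ 2 = ((F.card : ℝ))⁻¹ := by
    rw [hc, ← Real.sqrt_inv, Real.sq_sqrt (by positivity)]
  set f : G → ℝ := fun γ => if γ ∈ F then c else 0 with hf
  have hfval : ∀ γ, f γ = c ∨ f γ = 0 := by
    intro γ; by_cases h : γ ∈ F <;> simp [hf, h]
  have hsupp : Function.support f ⊆ (F : Set G) := by
    intro γ hγ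
    by_contra h
    have h' : γ ∉ F := by simpa using h
    exact hγ (by simp [hf, h'])
  refine ⟨f, ?_, ?_, ?_, hsupp⟩
  · intro γ; rcases hfval γ with h | h <;> rw [h] <;> positivity
  · rw [tsum_eq_sum (s := F) (fun γ hγ => by simp [hf, hγ])]
    have : ∀ γ ∈ F, f γ ^ 2 = ((F.card : ℝ))⁻¹ := fun γ hγ => by simp only [hf, if_pos hγ]; exact hc2
    rw [Finset.sum_congr rfl this, Finset.sum_const, nsmul_eq_mul]
    field_simp
  · intro s hs
    set T : Finset G := S ∪ S⁻¹ ∪ {1} with hT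
    have hsT : s ∈ T := by simp [hT, hs]
    have hsT' : s⁻¹ ∈ T := by simp [hT, Finset.mem_inv', hs]
    set Fi : Finset G := F.image (· * s⁻¹) with hFi
    have hFiMem : ∀ γ : G, γ ∈ Fi ↔ γ * s ∈ F := by
      intro γ
      simp only [hFi, Finset.mem_image]
      constructor
      · rintro ⟨b, hb, rfl⟩; simpa using hb
      · intro h; exact ⟨γ * s, h, by simp⟩
    set A : Finset G := F ∪ Fi with hA
    have hzero : ∀ γ ∉ A, (f γ - f (γ * s)) ^ 2 = 0 := by
      intro γ hγ
      rw [Finset.mem_union, not_or] at hγ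
      have h1 : f γ = 0 := by simp [hf, hγ.1]
      have h2 : f (γ * s) = 0 := by
        have := hγ.2
        rw [hFiMem] at this
        simp [hf, this]
      simp [h1, h2]
    rw [tsum_eq_sum (s := A) hzero]
    set Bad : Finset G := (F \ Fi) ∪ (Fi \ F) with hBad
    have hterm : ∀ γ ∈ A, (f γ - f (γ * s)) ^ 2 ≤ if γ ∈ Bad then c ^ 2 else 0 := by
      intro γ hγ
      by_cases hb : γ ∈ Bad
      · rw [if_pos hb]
        rcases hfval γ with h | h <;> rcases hfval (γ * s) with h' | h' <;>
          rw [h, h'] <;> nlinarith [hcpos]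
      · rw [if_neg hb]
        rw [hBad, Finset.mem_union, not_or, Finset.mem_sdiff, Finset.mem_sdiff, not_and, not_and,
          not_not, not_not] at hb
        rcases Finset.mem_union.1 hγ with h | h
        · have h2 := hb.1 h
          rw [hFiMem] at h2
          simp [hf, h, h2]
        · have h2 := hb.2 h
          have h3 := (hFiMem γ).1 h
          simp [hf, h2, h3]
    calc ∑ γ ∈ A, (f γ - f (γ * s)) ^ 2 ≤ ∑ γ ∈ A, (if γ ∈ Bad then c ^ 2 else 0) :=
          Finset.sum_le_sum hterm
      _ = ∑ γ ∈ A ∩ Bad, c ^ 2 := by rw [Finset.sum_ite_mem A Bad fun _ => c ^ 2]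
      _ ≤ ∑ γ ∈ Bad, c ^ 2 := Finset.sum_le_sum_of_subset_of_nonneg (Finset.inter_subset_right)
          (fun _ _ _ => by positivity)
      _ = Bad.card * c ^ 2 := by rw [Finset.sum_const, nsmul_eq_mul]
      _ ≤ ε ^ 2 := by
          have hb1 : ((Fi \ F).card : ℝ) ≤ ε ^ 2 / 2 * F.card := by
            refine le_trans ?_ hbd
            have : Fi \ F ⊆ (F * T) \ F := by
              intro γ hγ
              rw [Finset.mem_sdiff] at hγ ⊢
              refine ⟨?_, hγ.2⟩
              have := (hFiMem γ).1 hγ.1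
              have : (γ * s) * s⁻¹ ∈ F * T := Finset.mul_mem_mul this hsT'
              simpa using this
            exact_mod_cast Finset.card_le_card this
          have hb2 : ((F \ Fi).card : ℝ) ≤ ε ^ 2 / 2 * F.card := by
            refine le_trans ?_ hbd
            have himg : (F \ Fi).card = ((F \ Fi).image (· * s)).card :=
              (Finset.card_image_of_injective _ (mul_left_injective s)).symm
            have hsub : (F \ Fi).image (· * s) ⊆ (F * T) \ F := by
              intro γ hγ
              obtain ⟨b, hb, rfl⟩ := Finset.mem_image.1 hγ
              rw [Finset.mem_sdiff] at hb
              rw [Finset.mem_sdiff]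
              refine ⟨Finset.mul_mem_mul hb.1 hsT, ?_⟩
              rw [← hFiMem b]
              exact hb.2
            rw [himg]
            exact_mod_cast Finset.card_le_card hsub
          have hbadcard : (Bad.card : ℝ) ≤ ε ^ 2 * F.card := by
            have := Finset.card_union_le (F \ Fi) (Fi \ F)
            have h' : (Bad.card : ℝ) ≤ ((F \ Fi).card : ℝ) + ((Fi \ F).card : ℝ) := by
              exact_mod_cast this
            nlinarith
          rw [hc2]
          calc (Bad.card : ℝ) * ((F.card : ℝ))⁻¹
              ≤ (ε ^ 2 * F.card) * ((F.card : ℝ))⁻¹ :=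
                mul_le_mul_of_nonneg_right hbadcard (by positivity)
            _ = ε ^ 2 := by field_simp
end dir2

theorem stmt_15 {I : Type*} (G : I → Type*) [∀ i, Group (G i)]
    (S : ∀ i, Finset (G i))
    (hgen : ∀ i, Subgroup.closure ((S i : Set (G i))) = ⊤)
    (L : ℕ) (hL : ∀ i, (S i).card ≤ L) :
    (∀ ε : ℝ, 0 < ε → ∃ D : ℕ, ∃ f : ∀ i, G i → ℝ, ∀ i,
      (∀ γ, 0 ≤ f i γ) ∧ (∑' γ, f i γ ^ 2 = 1) ∧
      (∀ s ∈ S i, ∑' γ, (f i γ - f i (γ * s)) ^ 2 ≤ ε ^ 2) ∧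
      Function.support (f i) ⊆ wordBall ((S i : Set (G i))) D)
    ↔
    (∀ R : ℕ, ∀ ε : ℝ, 0 < ε → ∃ D' : ℕ, ∃ F : ∀ i, Finset (G i), ∀ i,
      (F i).Nonempty ∧
      ((((F i : Set (G i)) * wordBall ((S i : Set (G i))) R) \ (F i : Set (G i))).ncard : ℝ)
        ≤ ε * (F i).card ∧
      (F i : Set (G i)) ⊆ wordBall ((S i : Set (G i))) D') := by
  classical
  constructor
  · intro h R ε hε
    set M : ℝ := 2 * R * ((2 * L + 1 : ℕ) : ℝ) ^ R with hM
    have hM0 : 0 ≤ M := by positivity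
    set ε₀ : ℝ := ε / (M + 1) with hε₀def
    have hε₀ : 0 < ε₀ := div_pos hε (by linarith)
    obtain ⟨D, f, hf⟩ := h ε₀ hε₀
    have key : ∀ i, ∃ F : Finset (G i), F.Nonempty ∧
        ((((F * genT (S i) ^ R) \ F).card : ℝ)) ≤ ε * F.card ∧
        (F : Set (G i)) ⊆ ((genT (S i) ^ D : Finset (G i)) : Set (G i)) := by
      intro i
      obtain ⟨h0, h1, h2, h3⟩ := hf i
      rw [wordBall_coe] at h3
      have hbound : (2 * R * (((genT (S i)).card : ℝ) ^ R)) * ε₀ < ε := by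
        have hc : ((genT (S i)).card : ℝ) ≤ ((2 * L + 1 : ℕ) : ℝ) := by
          exact_mod_cast card_genT_le (hL i)
        have hpow : ((genT (S i)).card : ℝ) ^ R ≤ ((2 * L + 1 : ℕ) : ℝ) ^ R :=
          pow_le_pow_left₀ (by positivity) hc R
        have hle : 2 * (R : ℝ) * (((genT (S i)).card : ℝ) ^ R) * ε₀ ≤ M * ε₀ := by
          rw [hM]
          have h2R : (0:ℝ) ≤ 2 * (R:ℝ) := by positivity
          exact mul_le_mul_of_nonneg_right (mul_le_mul_of_nonneg_left hpow h2R) hε₀.le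
        have hMlt : M * ε₀ < ε := by
          have heq : M * ε₀ = ε * (M / (M + 1)) := by rw [hε₀def]; ring
          have hlt1 : M / (M + 1) < 1 := (div_lt_one (by linarith)).2 (by linarith)
          calc M * ε₀ = ε * (M / (M + 1)) := heq
            _ < ε * 1 := by exact mul_lt_mul_of_pos_left hlt1 hε
            _ = ε := mul_one ε
        linarith
      exact reiter_to_folner (S i) R D hε hε₀ (f i) h0 h1 h2 h3 hbound
    choose F hne hcard hsub using key
    refine ⟨D, F, fun i => ⟨hne i, ?_, ?_⟩⟩
    · rw [wordBall_coe, ← Finset.coe_mul, ← Finset.coe_sdiff, Set.ncard_coe_finset]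
      exact hcard i
    · rw [wordBall_coe]
      exact hsub i
  · intro h ε hε
    have hε' : 0 < ε ^ 2 / 2 := by positivity
    obtain ⟨D', F, hF⟩ := h 1 (ε ^ 2 / 2) hε'
    have key : ∀ i, ∃ f : G i → ℝ, (∀ γ, 0 ≤ f γ) ∧ (∑' γ, f γ ^ 2 = 1) ∧
        (∀ s ∈ S i, ∑' γ, (f γ - f (γ * s)) ^ 2 ≤ ε ^ 2) ∧
        Function.support f ⊆ ((F i : Finset (G i)) : Set (G i)) := by
      intro i
      obtain ⟨hne, hcard, hsub⟩ := hF i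
      rw [wordBall_coe, pow_one, ← Finset.coe_mul, ← Finset.coe_sdiff,
        Set.ncard_coe_finset] at hcard
      exact folner_to_reiter (S i) hε (F i) hne hcard
    choose f h0 h1 h2 h3 using key
    refine ⟨D', f, fun i => ⟨h0 i, h1 i, h2 i, ?_⟩⟩
    obtain ⟨hne, hcard, hsub⟩ := hF i
    exact (h3 i).trans hsub
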